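/- Let G be a countable group. Then G is left-orderable if and only if there exists an injective group homomorphism h : G → Homeo₊(ℝ); that is, if and only if G acts faithfully on the real line by orientation-preserving homeomorphisms. -/

import Mathlib

open Filter Topology Set

def HomeoPlusReal : Subgroup (Equiv.Perm ℝ) where
  carrier := {f | Continuous f ∧ Continuous f.symm ∧ StrictMono f}
  one_mem' := by
    refine ⟨continuous_id, ?_, fun a b h => h⟩
    exact continuous_id
  mul_mem' := by
    rintro a b ⟨ha1, ha2, ha3⟩ ⟨hb1, hb2, hb3⟩
    refine ⟨?_, ?_, ?_⟩
    · simpa [Equiv.Perm.coe_mul] using ha1.comp hb1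
    · have : Continuous (⇑b.symm ∘ ⇑a.symm) := hb2.comp ha2
      simpa [Equiv.Perm.mul_def, Equiv.symm_trans_apply, Function.comp] using this
    · intro x y h
      simpa [Equiv.Perm.coe_mul] using ha3 (hb3 h)
  inv_mem' := by
    rintro a ⟨ha1, ha2, ha3⟩
    refine ⟨by simpa using ha2, by exact ha1, ?_⟩
    intro x y h
    have h2 := ha3.lt_iff_lt (a := a.symm x) (b := a.symm y)
    simp only [Equiv.apply_symm_apply] at h2
    simpa using h2.mp h

/-- A group is left-orderable if it admits a linear order invariant under
left multiplication: `g ≺ h` implies `f * g ≺ f * h`. -/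
def IsLeftOrderable (G : Type*) [Group G] : Prop :=
  ∃ r : LinearOrder G, ∀ f g h : G, r.lt g h → r.lt (f * g) (f * h)

/-! ### Extending order automorphisms of `ℚ` to `ℝ` -/

noncomputable def extFun (φ : ℚ ≃o ℚ) : ℝ → ℝ :=
  fun x => sSup ((fun q : ℚ => ((φ q : ℚ) : ℝ)) '' {q : ℚ | (q : ℝ) ≤ x})

lemma extFun_set_nonempty (φ : ℚ ≃o ℚ) (x : ℝ) :
    ((fun q : ℚ => ((φ q : ℚ) : ℝ)) '' {q : ℚ | (q : ℝ) ≤ x}).Nonempty := by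
  obtain ⟨q, hq⟩ := exists_rat_lt x
  exact ⟨_, ⟨q, hq.le, rfl⟩⟩

lemma extFun_set_bddAbove (φ : ℚ ≃o ℚ) (x : ℝ) :
    BddAbove ((fun q : ℚ => ((φ q : ℚ) : ℝ)) '' {q : ℚ | (q : ℝ) ≤ x}) := by
  obtain ⟨q', hq'⟩ := exists_rat_gt x
  refine ⟨((φ q' : ℚ) : ℝ), ?_⟩
  rintro _ ⟨q, hq, rfl⟩
  have : q ≤ q' := by exact_mod_cast hq.trans hq'.le
  show ((φ q : ℚ) : ℝ) ≤ ((φ q' : ℚ) : ℝ)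
  exact_mod_cast φ.le_iff_le.2 this

lemma extFun_rat (φ : ℚ ≃o ℚ) (q : ℚ) : extFun φ (q : ℝ) = ((φ q : ℚ) : ℝ) := by
  refine le_antisymm (csSup_le (extFun_set_nonempty φ q) ?_)
    (le_csSup (extFun_set_bddAbove φ q) ⟨q, show (q:ℝ) ≤ (q:ℝ) from le_refl _, rfl⟩)
  rintro _ ⟨p, hp, rfl⟩
  have : p ≤ q := by exact_mod_cast hp
  show ((φ p : ℚ) : ℝ) ≤ ((φ q : ℚ) : ℝ)
  exact_mod_cast φ.le_iff_le.2 this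

lemma extFun_strictMono (φ : ℚ ≃o ℚ) : StrictMono (extFun φ) := by
  intro x y hxy
  obtain ⟨q1, hq1, hq1'⟩ := exists_rat_btwn hxy
  obtain ⟨q2, hq2, hq2'⟩ := exists_rat_btwn hq1'
  have h1 : extFun φ x ≤ ((φ q1 : ℚ) : ℝ) := by
    refine csSup_le (extFun_set_nonempty φ x) ?_
    rintro _ ⟨p, hp, rfl⟩
    have : p ≤ q1 := by exact_mod_cast le_of_lt (lt_of_le_of_lt hp hq1)
    show ((φ p : ℚ) : ℝ) ≤ ((φ q1 : ℚ) : ℝ)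
    exact_mod_cast φ.le_iff_le.2 this
  have h2 : ((φ q2 : ℚ) : ℝ) ≤ extFun φ y :=
    le_csSup (extFun_set_bddAbove φ y) ⟨q2, hq2'.le, rfl⟩
  have h3 : ((φ q1 : ℚ) : ℝ) < ((φ q2 : ℚ) : ℝ) := by
    have : q1 < q2 := by exact_mod_cast hq2
    exact_mod_cast φ.lt_iff_lt.2 this
  exact lt_of_le_of_lt h1 (lt_of_lt_of_le h3 h2)

lemma extFun_inv_comp (φ : ℚ ≃o ℚ) (x : ℝ) : extFun φ.symm (extFun φ x) = x := by
  have key : ∀ z : ℝ, ∀ q : ℚ, z < q → extFun φ.symm (extFun φ z) < q := by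
    intro z q hzq
    calc extFun φ.symm (extFun φ z) < extFun φ.symm (extFun φ q) :=
          (extFun_strictMono φ.symm) ((extFun_strictMono φ) hzq)
      _ = q := by rw [extFun_rat, extFun_rat]; simp
  have key' : ∀ z : ℝ, ∀ q : ℚ, (q : ℝ) < z → (q : ℝ) < extFun φ.symm (extFun φ z) := by
    intro z q hzq
    calc (q:ℝ) = extFun φ.symm (extFun φ q) := by rw [extFun_rat, extFun_rat]; simp
      _ < extFun φ.symm (extFun φ z) := (extFun_strictMono φ.symm) ((extFun_strictMono φ) hzq)
  refine le_antisymm ?_ ?_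
  · by_contra hc
    push_neg at hc
    obtain ⟨q, hq1, hq2⟩ := exists_rat_btwn hc
    exact absurd (key x q hq1) (not_lt.2 hq2.le)
  · by_contra hc
    push_neg at hc
    obtain ⟨q, hq1, hq2⟩ := exists_rat_btwn hc
    exact absurd (key' x q hq2) (not_lt.2 hq1.le)

noncomputable def extIso (φ : ℚ ≃o ℚ) : ℝ ≃o ℝ where
  toFun := extFun φ
  invFun := extFun φ.symm
  left_inv := extFun_inv_comp φ
  right_inv := by
    intro x
    have := extFun_inv_comp φ.symm x
    simpa using this
  map_rel_iff' := by
    intro a b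
    exact (extFun_strictMono φ).le_iff_le

lemma extIso_rat (φ : ℚ ≃o ℚ) (q : ℚ) : extIso φ (q : ℝ) = ((φ q : ℚ) : ℝ) := extFun_rat φ q

lemma orderIso_real_ext_unique (ψ₁ ψ₂ : ℝ ≃o ℝ) (h : ∀ q : ℚ, ψ₁ (q : ℝ) = ψ₂ (q : ℝ)) :
    ∀ x, ψ₁ x = ψ₂ x := by
  have h1 : Continuous ψ₁ := (ψ₁.toHomeomorph).continuous
  have h2 : Continuous ψ₂ := (ψ₂.toHomeomorph).continuous
  have := Continuous.ext_on (Rat.denseRange_cast (𝕜 := ℝ)) h1 h2 ?_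
  · exact fun x => congrFun this x
  · rintro _ ⟨q, rfl⟩
    exact h q

/-! ### The lexicographic `G × ℚ` order -/

lemma lexlt_iff {G : Type*} [LinearOrder G] (p q : G ×ₗ ℚ) :
    p < q ↔ (ofLex p).1 < (ofLex q).1 ∨ ((ofLex p).1 = (ofLex q).1 ∧ (ofLex p).2 < (ofLex q).2) := by
  have := (Prod.Lex.lt_iff : p < q ↔ _)
  simpa using this

section Fwd

variable {G : Type*} [Group G] [Countable G] (r : LinearOrder G)

noncomputable def lexIso : by letI := r; exact Nonempty ((G ×ₗ ℚ) ≃o ℚ) := by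
  letI := r
  haveI : DenselyOrdered (G ×ₗ ℚ) := by
    constructor
    intro a b hab
    rw [lexlt_iff] at hab
    rcases hab with h | ⟨h1, h2⟩
    · refine ⟨toLex ((ofLex a).1, (ofLex a).2 + 1), ?_, ?_⟩
      · rw [lexlt_iff]; right; exact ⟨rfl, by simp⟩
      · rw [lexlt_iff]; left; exact h
    · obtain ⟨q, hq1, hq2⟩ := exists_between h2
      refine ⟨toLex ((ofLex a).1, q), ?_, ?_⟩
      · rw [lexlt_iff]; right; exact ⟨rfl, hq1⟩
      · rw [lexlt_iff]; right; exact ⟨h1, hq2⟩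
  haveI : NoMinOrder (G ×ₗ ℚ) := by
    constructor
    intro a
    refine ⟨toLex ((ofLex a).1, (ofLex a).2 - 1), ?_⟩
    rw [lexlt_iff]; right; exact ⟨rfl, by simp⟩
  haveI : NoMaxOrder (G ×ₗ ℚ) := by
    constructor
    intro a
    refine ⟨toLex ((ofLex a).1, (ofLex a).2 + 1), ?_⟩
    rw [lexlt_iff]; right; exact ⟨rfl, by simp⟩
  haveI : Countable (G ×ₗ ℚ) := by
    have : Countable (G × ℚ) := inferInstance
    exact this
  haveI : Nonempty (G ×ₗ ℚ) := ⟨toLex (1, 0)⟩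
  exact Order.iso_of_countable_dense (G ×ₗ ℚ) ℚ

noncomputable def actL (hr : ∀ f g h : G, r.lt g h → r.lt (f * g) (f * h)) (g : G) :
    by letI := r; exact ((G ×ₗ ℚ) ≃o (G ×ₗ ℚ)) := by
  letI := r
  have hsm : StrictMono (fun p : G ×ₗ ℚ => toLex (g * (ofLex p).1, (ofLex p).2)) := by
    intro p q hpq
    rw [lexlt_iff] at hpq ⊢
    rcases hpq with h | ⟨h1, h2⟩
    · left; exact hr g _ _ h
    · right; exact ⟨by simpa using congrArg (g * ·) h1, h2⟩
  exact
    { toFun := fun p => toLex (g * (ofLex p).1, (ofLex p).2)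
      invFun := fun p => toLex (g⁻¹ * (ofLex p).1, (ofLex p).2)
      left_inv := by intro p; simp
      right_inv := by intro p; simp
      map_rel_iff' := by intro a b; exact hsm.le_iff_le }

omit [Countable G] in
lemma actL_apply (hr : ∀ f g h : G, r.lt g h → r.lt (f * g) (f * h)) (g : G) (p : Lex (G × ℚ)) :
    actL r hr g p = toLex (g * (ofLex p).1, (ofLex p).2) := rfl

end Fwd

/-- Dynamic realization: a countable group is left-orderable iff it acts
faithfully on the real line by orientation-preserving homeomorphisms. -/
theorem isLeftOrderable_iff_faithful_action {G : Type*} [Group G] [Countable G] :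
    IsLeftOrderable G ↔ ∃ h : G →* HomeoPlusReal, Function.Injective h := by
  constructor
  · rintro ⟨r, hr⟩
    letI := r
    obtain ⟨e⟩ := lexIso (G := G) r
    let Q : G → ℚ ≃o ℚ := fun g => (e.symm.trans (actL r hr g)).trans e
    have hQmul : ∀ a b : G, ∀ q : ℚ, Q (a * b) q = Q a (Q b q) := by
      intro a b q
      show e (actL r hr (a * b) (e.symm q)) = e (actL r hr a (e.symm (e (actL r hr b (e.symm q)))))
      rw [e.symm_apply_apply]
      congr 1
      rw [actL_apply, actL_apply, actL_apply]
      simp [mul_assoc]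
    have hQone : ∀ q : ℚ, Q 1 q = q := by
      intro q
      show e (actL r hr 1 (e.symm q)) = q
      rw [actL_apply]
      simp
    let R : G → ℝ ≃o ℝ := fun g => extIso (Q g)
    have hRrat : ∀ g : G, ∀ q : ℚ, R g (q : ℝ) = ((Q g q : ℚ) : ℝ) := fun g q => extIso_rat (Q g) q
    have hRmul : ∀ a b : G, ∀ x : ℝ, R (a * b) x = R a (R b x) := by
      intro a b
      refine orderIso_real_ext_unique (R (a * b)) ((R b).trans (R a)) ?_
      intro q
      show R (a * b) (q:ℝ) = R a (R b (q:ℝ))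
      rw [hRrat, hRrat, hRrat, hQmul]
    have hRone : ∀ x : ℝ, R 1 x = x := by
      refine orderIso_real_ext_unique (R 1) (OrderIso.refl ℝ) ?_
      intro q
      show R 1 (q:ℝ) = (q:ℝ)
      rw [hRrat, hQone]
    let H : G →* HomeoPlusReal :=
      { toFun := fun g => ⟨(R g).toEquiv,
          ((R g).toHomeomorph).continuous,
          ((R g).symm.toHomeomorph).continuous,
          (R g).strictMono⟩
        map_one' := by
          apply Subtype.ext
          apply Equiv.ext
          intro x
          exact hRone x
        map_mul' := by
          intro a b
          apply Subtype.ext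
          apply Equiv.ext
          intro x
          exact hRmul a b x }
    refine ⟨H, ?_⟩
    rw [injective_iff_map_eq_one]
    intro g hg
    have hRg : ∀ x : ℝ, R g x = x := by
      intro x
      have := congrArg (fun z : HomeoPlusReal => (z : Equiv.Perm ℝ) x) hg
      exact this
    have hQg : ∀ q : ℚ, Q g q = q := by
      intro q
      have := hRg (q : ℝ)
      rw [hRrat] at this
      exact_mod_cast this
    have hAg : actL r hr g (toLex (1, 0)) = toLex (1, 0) := by
      have h1 : Q g (e (toLex (1, 0))) = e (toLex (1, 0)) := hQg _
      have h2 : e (actL r hr g (e.symm (e (toLex (1, 0))))) = e (toLex (1, 0)) := h1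
      rw [e.symm_apply_apply] at h2
      exact e.injective h2
    rw [actL_apply] at hAg
    have := congrArg (fun p => (ofLex p).1) hAg
    simpa using this
  · rintro ⟨h, hinj⟩
    classical
    let en : ℕ ≃ ℚ := (Denumerable.eqv ℚ).symm
    let Φ : G → Lex (ℕ → ℝ) := fun g => toLex fun n => ((h g : Equiv.Perm ℝ) (en n))
    have hΦ : Function.Injective Φ := by
      intro a b hab
      have hfun : ∀ n : ℕ, ((h a : Equiv.Perm ℝ) (en n)) = ((h b : Equiv.Perm ℝ) (en n)) :=
        fun n => congrFun (congrArg ofLex hab) n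
      have heq : ⇑(h a : Equiv.Perm ℝ) = ⇑(h b : Equiv.Perm ℝ) := by
        refine Continuous.ext_on (Rat.denseRange_cast (𝕜 := ℝ)) (h a).2.1 (h b).2.1 ?_
        rintro _ ⟨q, rfl⟩
        simpa using hfun (en.symm q)
      apply hinj
      exact Subtype.ext (Equiv.coe_fn_injective heq)
    let r : LinearOrder G := LinearOrder.lift' Φ hΦ
    have hlt : ∀ a b : G, r.lt a b ↔ Φ a < Φ b := fun a b => Iff.rfl
    refine ⟨r, ?_⟩
    intro f g g' hgg'
    rw [hlt] at hgg' ⊢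
    obtain ⟨n, hm, hn⟩ : ∃ n, (∀ m, m < n → Φ g m = Φ g' m) ∧ Φ g n < Φ g' n := hgg'
    have happ : ∀ a b : G, ∀ x : ℝ, ((h (a * b) : Equiv.Perm ℝ)) x
        = (h a : Equiv.Perm ℝ) ((h b : Equiv.Perm ℝ) x) := by
      intro a b x
      rw [map_mul]
      rfl
    refine ⟨n, ?_, ?_⟩
    · intro m hmn
      show ((h (f * g) : Equiv.Perm ℝ) (en m)) = ((h (f * g') : Equiv.Perm ℝ) (en m))
      rw [happ, happ]
      exact congrArg _ (hm m hmn)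
    · show ((h (f * g) : Equiv.Perm ℝ) (en n)) < ((h (f * g') : Equiv.Perm ℝ) (en n))
      rw [happ, happ]
      exact (h f).2.2.2 hn
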